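/- Let Π be an orthogonal projector on C^N, h ∈ C^N nonzero with h_∥ = Π h ≠ 0, and let ĥ be a unit vector lying in the range of Π. Then the squared chordal distance decomposes as d²(h, ĥ) = ‖h̃_∥‖² · d²(h_∥, ĥ) + ‖h̃_⊥‖², where h̃_∥ = Π h/‖h‖ and h̃_⊥ = (I−Π)h/‖h‖. -/

import Mathlib

open Matrix

/-- Squared Euclidean norm of a complex vector. -/
noncomputable def nsq {n : ℕ} (x : Fin n → ℂ) : ℝ := (star x ⬝ᵥ x).re

/-- Squared chordal distance between two (nonzero) complex vectors. -/
noncomputable def chordalSq {n : ℕ} (x y : Fin n → ℂ) : ℝ :=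
  1 - ‖star x ⬝ᵥ y‖ ^ 2 / (nsq x * nsq y)

lemma nsq_eq_sum {n : ℕ} (x : Fin n → ℂ) : nsq x = ∑ i, Complex.normSq (x i) := by
  simp [nsq, dotProduct, Complex.mul_re, Complex.normSq_apply]

lemma nsq_pos {n : ℕ} {x : Fin n → ℂ} (hx : x ≠ 0) : 0 < nsq x := by
  rw [nsq_eq_sum]
  obtain ⟨i, hi⟩ : ∃ i, x i ≠ 0 := by
    by_contra hc; push_neg at hc; exact hx (funext hc)
  exact Finset.sum_pos' (fun j _ => Complex.normSq_nonneg _)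
    ⟨i, Finset.mem_univ i, Complex.normSq_pos.mpr hi⟩

lemma key_dot {N : ℕ} (P : Matrix (Fin N) (Fin N) ℂ) (hherm : Pᴴ = P)
    (h y : Fin N → ℂ) :
    star (P.mulVec h) ⬝ᵥ y = star h ⬝ᵥ P.mulVec y := by
  rw [star_mulVec, hherm, ← dotProduct_mulVec]

/-- Decomposition of the squared chordal distance to a codeword in the range of an
orthogonal projector: `d²(h,ĥ) = ‖h̃_∥‖² d²(h_∥,ĥ) + ‖h̃_⊥‖²`. -/
theorem chordalSq_projection_decomposition {N : ℕ}
    (P : Matrix (Fin N) (Fin N) ℂ) (hidem : P * P = P) (hherm : Pᴴ = P)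
    (h hHat : Fin N → ℂ) (hh : h ≠ 0) (hpar : P.mulVec h ≠ 0)
    (hunit : nsq hHat = 1) (hrange : P.mulVec hHat = hHat) :
    chordalSq h hHat =
      (nsq (P.mulVec h) / nsq h) * chordalSq (P.mulVec h) hHat
        + nsq ((1 - P).mulVec h) / nsq h := by
  have hc : star (P.mulVec h) ⬝ᵥ hHat = star h ⬝ᵥ hHat := by
    rw [key_dot P hherm, hrange]
  have ha : nsq (P.mulVec h) = (star h ⬝ᵥ P.mulVec h).re := by
    unfold nsq
    rw [key_dot P hherm, Matrix.mulVec_mulVec, hidem]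
  have hperp : nsq ((1 - P).mulVec h) = nsq h - nsq (P.mulVec h) := by
    unfold nsq
    rw [key_dot (1 - P) (by simp [hherm]) h, Matrix.mulVec_mulVec]
    have : (1 - P) * (1 - P) = 1 - P := by
      simp [mul_sub, sub_mul, hidem]
    rw [this, sub_mulVec, one_mulVec, dotProduct_sub, Complex.sub_re,
      key_dot P hherm, Matrix.mulVec_mulVec, hidem]
  have hn : nsq h ≠ 0 := ne_of_gt (nsq_pos hh)
  have hap : nsq (P.mulVec h) ≠ 0 := ne_of_gt (nsq_pos hpar)
  rw [hperp]
  unfold chordalSq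
  rw [hc, hunit]
  field_simp
  ring
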